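/- In the setting of the one-dimensional optimal stopping problem v_⋆(x) := inf_τ E[ ∫_0^τ e^{−ρt} Ψ^x_t h'(Ψ^x_t) dt + 1_{{τ < ∞}} e^{−ρτ} Ψ^x_τ ], assume additionally ρ > max(β₂ + σ²/2, γβ₂ + (σ²/2)γ(γ − 1)). If x > 0 satisfies h'(x) < ρ − β₂, then v_⋆(x) < x; consequently every point of the stopping set { x > 0 : v_⋆(x) ≥ x } satisfies h'(x) ≥ ρ − β₂. -/

import Mathlib

set_option maxHeartbeats 1000000


open MeasureTheory ProbabilityTheory ENNReal

/-- `W` is a standard one-dimensional Brownian motion on `(Ω, F, P)`. -/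
def IsStandardBM {Ω : Type*} [MeasurableSpace Ω] (μ : Measure Ω) (W : ℝ → Ω → ℝ) : Prop :=
  (∀ t : ℝ, Measurable (W t)) ∧
  (∀ᵐ ω ∂μ, W 0 ω = 0) ∧
  (∀ᵐ ω ∂μ, Continuous fun t => W t ω) ∧
  (∀ (n : ℕ) (t : ℕ → ℝ), Monotone t → (∀ i, 0 ≤ t i) →
    iIndepFun
      (fun (i : Fin n) ω => W (t (i + 1)) ω - W (t i) ω) μ) ∧
  (∀ s t : ℝ, 0 ≤ s → s ≤ t →
    μ.map (fun ω => W t ω - W s ω) = gaussianReal 0 (Real.toNNReal (t - s)))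

/-- The geometric Brownian motion `Ψ^x_t = x exp((β₂ − σ²/2)t + σ W_t)`. -/
noncomputable def gbm {Ω : Type*} (W : ℝ → Ω → ℝ) (β₂ σ x : ℝ) (t : ℝ) (ω : Ω) : ℝ :=
  x * Real.exp ((β₂ - σ ^ 2 / 2) * t + σ * W t ω)

/-- The natural filtration generated by the process `W`: `σ(W_s : 0 ≤ s ≤ t)`. -/
def natFilt {Ω : Type*} (W : ℝ → Ω → ℝ) (t : ℝ) : MeasurableSpace Ω :=
  ⨆ s ∈ Set.Icc (0:ℝ) t, MeasurableSpace.comap (W s) (inferInstance : MeasurableSpace ℝ)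

/-- `τ : Ω → [0,∞]` is a stopping time of the natural filtration of `W`. -/
def IsNatStoppingTime {Ω : Type*} (W : ℝ → Ω → ℝ) (τ : Ω → ℝ≥0∞) : Prop :=
  ∀ t : ℝ, 0 ≤ t → MeasurableSet[natFilt W t] {ω | τ ω ≤ ENNReal.ofReal t}

/-- The cost `E[∫_0^τ e^{−ρt} X_t h'(X_t) dt + 1_{τ<∞} e^{−ρτ} X_τ]` associated with the
stopping time `τ` (the terminal payoff being `0` on `{τ = ∞}`). -/
noncomputable def stopCost {Ω : Type*} [MeasurableSpace Ω] (μ : Measure Ω) (ρ : ℝ)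
    (h' : ℝ → ℝ) (X : ℝ → Ω → ℝ) (τ : Ω → ℝ≥0∞) : ℝ≥0∞ :=
  ∫⁻ ω,
    (∫⁻ t in {t : ℝ | 0 ≤ t ∧ ENNReal.ofReal t < τ ω},
        ENNReal.ofReal (Real.exp (-ρ * t) * X t ω * h' (X t ω)))
      + (if τ ω < ⊤ then
          ENNReal.ofReal (Real.exp (-ρ * (τ ω).toReal) * X (τ ω).toReal ω) else 0) ∂μ

/-- The value `v(x) = inf_τ stopCost` of the optimal stopping problem, the infimum being
over all stopping times of the natural filtration of `W`. -/
noncomputable def stopValue {Ω : Type*} [MeasurableSpace Ω] (μ : Measure Ω) (ρ : ℝ)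
    (h' : ℝ → ℝ) (W : ℝ → Ω → ℝ) (X : ℝ → Ω → ℝ) : ℝ≥0∞ :=
  ⨅ τ : {τ : Ω → ℝ≥0∞ // IsNatStoppingTime W τ}, stopCost μ ρ h' X τ.1

section Aux

open Real NNReal

private lemma pdf_mul_exp (c z : ℝ) :
    Real.exp (c * z) * gaussianPDFReal 0 1 z
      = Real.exp (c ^ 2 / 2) * gaussianPDFReal c 1 z := by
  simp only [gaussianPDFReal, NNReal.coe_one, mul_one, sub_zero]
  have h : -z^2/2 + c*z = c^2/2 + -(z-c)^2/2 := by ring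
  calc rexp (c*z) * ((√(2*π))⁻¹ * rexp (-z^2/2))
      = (√(2*π))⁻¹ * rexp (-z^2/2 + c*z) := by rw [Real.exp_add]; ring
    _ = rexp (c^2/2) * ((√(2*π))⁻¹ * rexp (-(z-c)^2/2)) := by rw [h, Real.exp_add]; ring

private lemma gauss_exp_integrable (c : ℝ) :
    Integrable (fun z => Real.exp (c * z)) (gaussianReal 0 1) := by
  rw [gaussianReal_of_var_ne_zero _ one_ne_zero]
  rw [integrable_withDensity_iff (measurable_gaussianPDF 0 1)
    (Filter.Eventually.of_forall fun z => ENNReal.ofReal_lt_top)]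
  have : (fun z => Real.exp (c * z) * (gaussianPDF 0 1 z).toReal)
      = fun z => Real.exp (c ^ 2 / 2) * gaussianPDFReal c 1 z := by
    funext z
    rw [gaussianPDF, ENNReal.toReal_ofReal (gaussianPDFReal_nonneg _ _ _), pdf_mul_exp]
  rw [this]
  exact (integrable_gaussianPDFReal c 1).const_mul _

private lemma gauss_exp_integral (c : ℝ) :
    ∫ z, Real.exp (c * z) ∂(gaussianReal 0 1) = Real.exp (c ^ 2 / 2) := by
  have h1 : gaussianReal 0 1
      = volume.withDensity (fun z => ((gaussianPDFReal 0 1 z).toNNReal : ℝ≥0∞)) := by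
    rw [gaussianReal_of_var_ne_zero _ one_ne_zero]; rfl
  have h2 := integral_withDensity_eq_integral_smul (μ := volume) (E := ℝ)
    (f := fun z => (gaussianPDFReal 0 1 z).toNNReal)
    (measurable_gaussianPDFReal 0 1).real_toNNReal (fun z => Real.exp (c * z))
  rw [h1, h2]
  have : (fun z => ((gaussianPDFReal 0 1 z).toNNReal : ℝ≥0) • Real.exp (c * z))
      = fun z => Real.exp (c ^ 2 / 2) * gaussianPDFReal c 1 z := by
    funext z
    rw [NNReal.smul_def, smul_eq_mul, Real.coe_toNNReal _ (gaussianPDFReal_nonneg _ _ _),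
      mul_comm, pdf_mul_exp]
  rw [this, integral_const_mul, integral_gaussianPDFReal_eq_one c one_ne_zero, mul_one]

private lemma gauss_exp_abs_integrable (c : ℝ) :
    Integrable (fun z => Real.exp (c * |z|)) (gaussianReal 0 1) := by
  have h1 : Integrable (fun z => Real.exp (c * z) + Real.exp (-c * z)) (gaussianReal 0 1) :=
    (gauss_exp_integrable c).add (gauss_exp_integrable (-c))
  refine h1.mono ((Real.continuous_exp.comp
    (continuous_const.mul continuous_abs)).aestronglyMeasurable)
    (Filter.Eventually.of_forall fun z => ?_)
  have h2 : Real.exp (c * |z|) ≤ Real.exp (c * z) + Real.exp (-c * z) := by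
    rcases abs_cases z with ⟨hz, _⟩ | ⟨hz, _⟩
    · rw [hz]
      nlinarith [Real.exp_pos (-c * z)]
    · rw [hz]
      have he : c * -z = -c * z := by ring
      rw [he]
      nlinarith [Real.exp_pos (c * z)]
  rw [Real.norm_eq_abs, abs_of_pos (Real.exp_pos _)]
  exact le_trans h2 (le_abs_self _)

end Aux

/-- If `h'(x) < ρ − β₂` then `v_⋆(x) < x`; consequently every point of the stopping set
`{ x > 0 : v_⋆(x) ≥ x }` satisfies `h'(x) ≥ ρ − β₂`. -/
theorem stopValue_lt_of_deriv_lt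
    {Ω : Type*} [MeasurableSpace Ω] (μ : Measure Ω) [IsProbabilityMeasure μ]
    (W : ℝ → Ω → ℝ) (hW : IsStandardBM μ W)
    (β₂ σ : ℝ) (hσ : 0 < σ)
    (γ K₁ : ℝ) (hγ : 1 < γ) (hK₁ : 0 < K₁)
    (h h' : ℝ → ℝ)
    (hconv : ConvexOn ℝ Set.univ h)
    (hderiv : ∀ u : ℝ, HasDerivAt h (h' u) u)
    (hh'_cont : Continuous h')
    (hmono : MonotoneOn h (Set.Ici (0:ℝ)))
    (h0 : h 0 = 0)
    (hh'_bound : ∀ u : ℝ, 0 ≤ u → |h' u| ≤ K₁ * (1 + u ^ (γ - 1)))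
    (ρ : ℝ) (hρ : max (β₂ + σ ^ 2 / 2) (γ * β₂ + σ ^ 2 / 2 * γ * (γ - 1)) < ρ) :
    (∀ x : ℝ, 0 < x → h' x < ρ - β₂ →
        stopValue μ ρ h' W (gbm W β₂ σ x) < ENNReal.ofReal x) ∧
      ∀ x : ℝ, 0 < x → ENNReal.ofReal x ≤ stopValue μ ρ h' W (gbm W β₂ σ x) →
        ρ - β₂ ≤ h' x := by
  classical
  have hβρ : β₂ + σ ^ 2 / 2 < ρ := lt_of_le_of_lt (le_max_left _ _) hρ
  have hβρ' : β₂ < ρ := by nlinarith [sq_nonneg σ]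
  -- h' is nonnegative on [0, ∞)
  have h'_nonneg : ∀ u : ℝ, 0 ≤ u → 0 ≤ h' u := by
    intro u hu
    have hd : HasDerivWithinAt h (h' u) (Set.Ioi u) u := (hderiv u).hasDerivWithinAt
    have hslope := hasDerivWithinAt_iff_tendsto_slope.mp hd
    have hIoi : Set.Ioi u \ {u} = Set.Ioi u := by
      apply Set.diff_singleton_eq_self
      simp
    rw [hIoi] at hslope
    refine ge_of_tendsto hslope ?_
    refine eventually_nhdsWithin_of_forall (fun v hv => ?_)
    have hv' : u < v := hv
    have hmono' : h u ≤ h v := hmono hu (le_trans hu hv'.le) hv'.le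
    rw [slope_def_field]
    exact div_nonneg (by linarith) (by linarith)
  set ν := gaussianReal 0 1 with hν
  -- law of W t
  have hmap : ∀ t : ℝ, 0 ≤ t →
      μ.map (W t) = ν.map (fun z => Real.sqrt t * z) := by
    intro t ht
    have h1 : μ.map (W t) = μ.map (fun ω => W t ω - W 0 ω) := by
      refine (Measure.map_congr ?_).symm
      filter_upwards [hW.2.1] with ω h0
      simp [h0]
    have h2 := gaussianReal_map_const_mul (μ := 0) (v := 1) (Real.sqrt t)
    rw [h1, hW.2.2.2.2 0 t le_rfl ht, hν, h2, mul_zero]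
    congr 1
    apply NNReal.coe_injective
    simp [Real.sq_sqrt ht, Real.coe_toNNReal _ ht]
  have hlmap : ∀ t : ℝ, 0 ≤ t → ∀ Φ : ℝ → ℝ≥0∞, Measurable Φ →
      ∫⁻ ω, Φ (W t ω) ∂μ = ∫⁻ z, Φ (Real.sqrt t * z) ∂ν := by
    intro t ht Φ hΦ
    rw [← lintegral_map hΦ (hW.1 t), hmap t ht]
    exact lintegral_map hΦ (measurable_id.const_mul _)
  -- main claim
  have key : ∀ x : ℝ, 0 < x → h' x < ρ - β₂ →
      stopValue μ ρ h' W (gbm W β₂ σ x) < ENNReal.ofReal x := by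
    intro x hx hx'
    set b := β₂ - σ ^ 2 / 2 with hb
    set X := gbm W β₂ σ x with hXdef
    have hX : ∀ t ω, X t ω = x * Real.exp (b * t + σ * W t ω) := fun _ _ => rfl
    set a := ρ - β₂ with ha
    have ha0 : 0 < a := by rw [ha]; linarith
    set δ := (ρ - β₂ - h' x) / 2 with hδdef
    have hδ0 : 0 < δ := by rw [hδdef]; linarith
    have hxd : h' x + δ = a - δ := by rw [hδdef, ha]; ring
    set c₀ := x * (h' x + δ) with hc₀
    have hc₀0 : 0 < c₀ := mul_pos hx (by have := h'_nonneg x hx.le; linarith)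
    set M := x * Real.exp |b| with hM
    have hM0 : 0 < M := mul_pos hx (Real.exp_pos _)
    set F : ℝ → ℝ → ℝ := fun t z =>
      Real.exp (-ρ * t) * (x * Real.exp (b * t + σ * (Real.sqrt t * z)))
        * h' (x * Real.exp (b * t + σ * (Real.sqrt t * z))) with hF
    -- continuity of F in each variable
    have hFz_cont : ∀ t, Continuous fun z => F t z := by
      intro t
      have hc : Continuous fun z : ℝ => x * Real.exp (b * t + σ * (Real.sqrt t * z)) := by
        fun_prop
      fun_prop
    have hFt_cont : ∀ z, Continuous fun t => F t z := by
      intro z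
      have hc : Continuous fun t : ℝ => x * Real.exp (b * t + σ * (Real.sqrt t * z)) := by
        have := Real.continuous_sqrt
        fun_prop
      fun_prop
    -- nonnegativity of F
    have hF_nonneg : ∀ t z, 0 ≤ F t z := by
      intro t z
      have harg : (0:ℝ) < x * Real.exp (b * t + σ * (Real.sqrt t * z)) := by positivity
      exact mul_nonneg (mul_nonneg (Real.exp_pos _).le harg.le) (h'_nonneg _ harg.le)
    -- domination
    set bound : ℝ → ℝ := fun z => Real.exp |ρ| *
      (K₁ * (M * Real.exp (σ * |z|) + M ^ γ * Real.exp (γ * σ * |z|))) with hbounddef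
    have hbound_int : Integrable bound ν := by
      refine Integrable.const_mul ?_ _
      exact (((gauss_exp_abs_integrable σ).const_mul M).add
        ((gauss_exp_abs_integrable (γ * σ)).const_mul (M ^ γ))).const_mul K₁
    have hF_bound : ∀ t : ℝ, |t| ≤ 1 → ∀ z, ‖F t z‖ ≤ bound z := by
      intro t ht z
      set u := x * Real.exp (b * t + σ * (Real.sqrt t * z)) with hu
      have hu0 : 0 < u := by positivity
      have hsq : Real.sqrt t ≤ 1 := Real.sqrt_le_one.mpr (le_trans (le_abs_self t) ht)
      have hsq0 : 0 ≤ Real.sqrt t := Real.sqrt_nonneg t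
      have hexp : b * t + σ * (Real.sqrt t * z) ≤ |b| + σ * |z| := by
        have h1 : b * t ≤ |b| := by
          calc b*t ≤ |b*t| := le_abs_self _
            _ = |b| * |t| := abs_mul b t
            _ ≤ |b| * 1 := mul_le_mul_of_nonneg_left ht (abs_nonneg b)
            _ = |b| := mul_one _
        have h2 : Real.sqrt t * z ≤ |z| := by
          calc Real.sqrt t * z ≤ Real.sqrt t * |z| :=
                mul_le_mul_of_nonneg_left (le_abs_self z) hsq0
            _ ≤ 1 * |z| := mul_le_mul_of_nonneg_right hsq (abs_nonneg z)
            _ = |z| := one_mul _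
        have h2' : σ * (Real.sqrt t * z) ≤ σ * |z| := mul_le_mul_of_nonneg_left h2 hσ.le
        linarith
      have huM : u ≤ M * Real.exp (σ * |z|) := by
        rw [hu, hM, mul_assoc, ← Real.exp_add]
        exact mul_le_mul_of_nonneg_left (Real.exp_le_exp.mpr hexp) hx.le
      have huγ : u ^ γ ≤ M ^ γ * Real.exp (γ * σ * |z|) := by
        calc u ^ γ ≤ (M * Real.exp (σ * |z|)) ^ γ :=
              Real.rpow_le_rpow hu0.le huM (by linarith)
          _ = M ^ γ * (Real.exp (σ * |z|)) ^ γ :=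
              Real.mul_rpow hM0.le (Real.exp_pos _).le
          _ = M ^ γ * Real.exp (σ * |z| * γ) := by rw [← Real.exp_mul]
          _ = M ^ γ * Real.exp (γ * σ * |z|) := by ring_nf
      have hρt : Real.exp (-ρ * t) ≤ Real.exp |ρ| := by
        apply Real.exp_le_exp.mpr
        calc -ρ * t ≤ |(-ρ) * t| := le_abs_self _
          _ = |ρ| * |t| := by rw [abs_mul, abs_neg]
          _ ≤ |ρ| * 1 := mul_le_mul_of_nonneg_left ht (abs_nonneg ρ)
          _ = |ρ| := mul_one _
      have hfu : |h' u| ≤ K₁ * (1 + u ^ (γ - 1)) := hh'_bound u hu0.le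
      have huu : u * u ^ (γ - 1) = u ^ γ := by
        have h3 : u * u ^ (γ - 1) = u ^ ((1:ℝ) + (γ-1)) := by
          rw [Real.rpow_add hu0, Real.rpow_one]
        rw [h3]; norm_num
      have hnorm : ‖F t z‖ = Real.exp (-ρ*t) * u * |h' u| := by
        rw [Real.norm_eq_abs]
        simp only [hF]
        rw [abs_mul, abs_mul, abs_of_pos (Real.exp_pos _), abs_of_pos hu0]
      rw [hnorm, hbounddef]
      have hup : (0:ℝ) ≤ u ^ (γ - 1) := (Real.rpow_pos_of_pos hu0 _).le
      calc Real.exp (-ρ*t) * u * |h' u|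
          ≤ Real.exp (-ρ*t) * u * (K₁ * (1 + u^(γ-1))) :=
            mul_le_mul_of_nonneg_left hfu (by positivity)
        _ = Real.exp (-ρ*t) * (K₁ * (u + u * u^(γ-1))) := by ring
        _ = Real.exp (-ρ*t) * (K₁ * (u + u^γ)) := by rw [huu]
        _ ≤ Real.exp |ρ| * (K₁ * (u + u^γ)) := by
            have : (0:ℝ) ≤ K₁ * (u + u^γ) := by positivity
            exact mul_le_mul_of_nonneg_right hρt this
        _ ≤ Real.exp |ρ| * (K₁ * (M * Real.exp (σ * |z|) + M^γ * Real.exp (γ*σ * |z|))) := by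
            apply mul_le_mul_of_nonneg_left _ (Real.exp_pos _).le
            exact mul_le_mul_of_nonneg_left (add_le_add huM huγ) hK₁.le
    have hF_int : ∀ t : ℝ, |t| ≤ 1 → Integrable (F t) ν := by
      intro t ht
      refine hbound_int.mono (hFz_cont t).aestronglyMeasurable
        (Filter.Eventually.of_forall fun z => ?_)
      exact le_trans (hF_bound t ht z) (le_abs_self _)
    -- continuity of the mean at t = 0
    have hcont : ContinuousAt (fun t => ∫ z, F t z ∂ν) 0 := by
      refine continuousAt_of_dominated ?_ ?_ hbound_int ?_
      · exact Filter.Eventually.of_forall fun t => (hFz_cont t).aestronglyMeasurable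
      · have h1 : ∀ᶠ t : ℝ in nhds 0, |t| ≤ 1 := by
          filter_upwards [Metric.ball_mem_nhds (0:ℝ) one_pos] with t ht
          rw [Metric.mem_ball, Real.dist_eq, sub_zero] at ht; exact ht.le
        filter_upwards [h1] with t ht
        exact Filter.Eventually.of_forall fun z => hF_bound t ht z
      · exact Filter.Eventually.of_forall fun z => (hFt_cont z).continuousAt
    have hφ0 : ∫ z, F 0 z ∂ν = x * h' x := by
      have hval : (fun z => F 0 z) = fun _ => x * h' x := by
        funext z
        simp only [hF]
        norm_num [Real.sqrt_zero]
      rw [hval]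
      simp
    have hlt : x * h' x < c₀ := by
      rw [hc₀]
      nlinarith
    have hev : ∀ᶠ t : ℝ in nhds 0, (∫ z, F t z ∂ν) < c₀ := by
      have h1 := hcont
      rw [ContinuousAt, hφ0] at h1
      exact h1.eventually_lt_const hlt
    obtain ⟨r, hr0, hr⟩ := Metric.eventually_nhds_iff.mp hev
    -- choice of the horizon T
    set T := min (min (r/2) 1) (δ / (2 * a ^ 2)) with hT
    have hT0 : 0 < T := lt_min (lt_min (by positivity) one_pos) (by positivity)
    have hT1 : T ≤ 1 := le_trans (min_le_left _ _) (min_le_right _ _)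
    have hTr : T < r := lt_of_le_of_lt (le_trans (min_le_left _ _) (min_le_left _ _))
      (by linarith)
    have hTδ : a ^ 2 * T ≤ δ / 2 := by
      have h1 : T ≤ δ / (2 * a ^ 2) := min_le_right _ _
      have h2 : a ^ 2 * T ≤ a ^ 2 * (δ / (2 * a ^ 2)) :=
        mul_le_mul_of_nonneg_left h1 (sq_nonneg a)
      calc a ^ 2 * T ≤ a ^ 2 * (δ / (2 * a ^ 2)) := h2
        _ = δ / 2 := by field_simp
    -- pointwise-in-time bound on the running cost
    have hH : ∀ t : ℝ, 0 ≤ t → t < T →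
        (∫⁻ ω, ENNReal.ofReal (Real.exp (-ρ * t) * X t ω * h' (X t ω)) ∂μ)
          ≤ ENNReal.ofReal c₀ := by
      intro t ht htT
      have htabs : |t| ≤ 1 := by rw [abs_of_nonneg ht]; linarith
      have hΦ : Measurable fun y : ℝ => ENNReal.ofReal
          (Real.exp (-ρ * t) * (x * Real.exp (b * t + σ * y))
            * h' (x * Real.exp (b * t + σ * y))) := by
        apply Measurable.ennreal_ofReal
        have : Continuous fun y : ℝ => Real.exp (-ρ * t) * (x * Real.exp (b * t + σ * y))
            * h' (x * Real.exp (b * t + σ * y)) := by fun_prop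
        exact this.measurable
      have h1 : (∫⁻ ω, ENNReal.ofReal (Real.exp (-ρ * t) * X t ω * h' (X t ω)) ∂μ)
          = ∫⁻ z, ENNReal.ofReal (F t z) ∂ν := by
        have h2 := hlmap t ht _ hΦ
        simp only [hX]
        exact h2
      rw [h1, ← ofReal_integral_eq_lintegral_ofReal (hF_int t htabs)
          (Filter.Eventually.of_forall fun z => hF_nonneg t z)]
      apply ENNReal.ofReal_le_ofReal
      apply le_of_lt
      apply hr
      rw [Real.dist_eq, sub_zero, abs_of_nonneg ht]
      linarith
    -- terminal term
    have hterm : (∫⁻ ω, ENNReal.ofReal (Real.exp (-ρ * T) * X T ω) ∂μ)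
        = ENNReal.ofReal (x * Real.exp (-(a * T))) := by
      have hmeasφ : Measurable fun y : ℝ => ENNReal.ofReal (Real.exp (σ * y)) :=
        (Real.measurable_exp.comp (measurable_id.const_mul σ)).ennreal_ofReal
      calc (∫⁻ ω, ENNReal.ofReal (Real.exp (-ρ * T) * X T ω) ∂μ)
          = ∫⁻ ω, ENNReal.ofReal (x * Real.exp ((b - ρ) * T))
              * ENNReal.ofReal (Real.exp (σ * W T ω)) ∂μ := by
            refine lintegral_congr fun ω => ?_
            rw [← ENNReal.ofReal_mul (by positivity)]
            congr 1
            rw [hX]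
            rw [show x * Real.exp ((b - ρ) * T) * Real.exp (σ * W T ω)
                = x * Real.exp ((b - ρ) * T + σ * W T ω) from by
              rw [mul_assoc, ← Real.exp_add]]
            rw [show Real.exp (-ρ * T) * (x * Real.exp (b * T + σ * W T ω))
                = x * Real.exp (-ρ * T + (b * T + σ * W T ω)) from by
              rw [mul_left_comm, ← Real.exp_add]]
            exact congrArg (fun s => x * Real.exp s) (by ring)
        _ = ENNReal.ofReal (x * Real.exp ((b - ρ) * T))
              * ∫⁻ ω, ENNReal.ofReal (Real.exp (σ * W T ω)) ∂μ :=
            lintegral_const_mul _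
              ((Real.measurable_exp.comp ((hW.1 T).const_mul σ)).ennreal_ofReal)
        _ = ENNReal.ofReal (x * Real.exp ((b - ρ) * T))
              * ∫⁻ z, ENNReal.ofReal (Real.exp (σ * (Real.sqrt T * z))) ∂ν := by
            rw [hlmap T hT0.le _ hmeasφ]
        _ = ENNReal.ofReal (x * Real.exp ((b - ρ) * T))
              * ENNReal.ofReal (Real.exp ((σ * Real.sqrt T) ^ 2 / 2)) := by
            congr 1
            have hrw : (fun z : ℝ => Real.exp (σ * (Real.sqrt T * z)))
                = fun z => Real.exp ((σ * Real.sqrt T) * z) := by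
              funext z; rw [mul_assoc]
            rw [← ofReal_integral_eq_lintegral_ofReal
              (by rw [show (fun z : ℝ => Real.exp (σ * (Real.sqrt T * z)))
                  = fun z => Real.exp ((σ * Real.sqrt T) * z) from hrw]
                  exact gauss_exp_integrable _)
              (Filter.Eventually.of_forall fun z => (Real.exp_pos _).le)]
            congr 1
            calc ∫ z, Real.exp (σ * (Real.sqrt T * z)) ∂ν
                = ∫ z, Real.exp ((σ * Real.sqrt T) * z) ∂ν := by rw [hrw]
              _ = Real.exp ((σ * Real.sqrt T) ^ 2 / 2) := gauss_exp_integral _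
        _ = ENNReal.ofReal (x * Real.exp (-(a * T))) := by
            rw [← ENNReal.ofReal_mul (by positivity)]
            congr 1
            rw [mul_assoc, ← Real.exp_add]
            congr 2
            rw [mul_pow, Real.sq_sqrt hT0.le, hb, ha]
            ring
    -- the constant stopping time T
    have hτ : IsNatStoppingTime W (fun _ : Ω => ENNReal.ofReal T) := by
      intro t ht
      by_cases hc : ENNReal.ofReal T ≤ ENNReal.ofReal t
      · have hset : {ω : Ω | (fun _ : Ω => ENNReal.ofReal T) ω ≤ ENNReal.ofReal t}
            = Set.univ := by
          ext ω; simp [hc]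
        rw [hset]; exact @MeasurableSet.univ Ω (natFilt W t)
      · have hset : {ω : Ω | (fun _ : Ω => ENNReal.ofReal T) ω ≤ ENNReal.ofReal t}
            = ∅ := by
          ext ω; simp [hc]
        rw [hset]; exact @MeasurableSet.empty Ω (natFilt W t)
    have hvle : stopValue μ ρ h' W X ≤ stopCost μ ρ h' X (fun _ => ENNReal.ofReal T) := by
      unfold stopValue
      exact iInf_le (fun τ : {τ : Ω → ℝ≥0∞ // IsNatStoppingTime W τ} =>
        stopCost μ ρ h' X τ.1) ⟨fun _ => ENNReal.ofReal T, hτ⟩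
    -- the time set is [0, T)
    have hS : {t : ℝ | 0 ≤ t ∧ ENNReal.ofReal t < ENNReal.ofReal T} = Set.Ico 0 T := by
      ext t
      simp only [Set.mem_setOf_eq, Set.mem_Ico]
      constructor
      · rintro ⟨ht, hlt2⟩
        exact ⟨ht, by rwa [ENNReal.ofReal_lt_ofReal_iff hT0] at hlt2⟩
      · rintro ⟨ht, hlt2⟩
        exact ⟨ht, by rwa [ENNReal.ofReal_lt_ofReal_iff hT0]⟩
    -- measurable modification of W for joint measurability
    obtain ⟨N, hNsub, hNmeas, hN0⟩ :=
      exists_measurable_superset_of_null (ae_iff.mp hW.2.2.1)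
    set W' : ℝ → Ω → ℝ := fun t ω => if ω ∈ N then 0 else W t ω with hW'
    have hW'meas : ∀ t, Measurable (W' t) :=
      fun t => Measurable.ite hNmeas measurable_const (hW.1 t)
    have hW'cont : ∀ ω, Continuous fun t => W' t ω := by
      intro ω
      by_cases hω : ω ∈ N
      · simp only [hW', if_pos hω]; exact continuous_const
      · simp only [hW', if_neg hω]
        by_contra hc
        exact hω (hNsub hc)
    have hWu : Measurable (Function.uncurry W') :=
      measurable_uncurry_of_continuous_of_measurable hW'cont hW'meas
    set q : Ω → ℝ → ℝ≥0∞ := fun ω t => ENNReal.ofReal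
        (Real.exp (-ρ*t) * (x * Real.exp (b*t + σ * W' t ω))
          * h' (x * Real.exp (b*t + σ * W' t ω))) with hq
    have hq_meas : Measurable (Function.uncurry q) := by
      have hm : Measurable fun p : Ω × ℝ => W' p.2 p.1 := hWu.comp measurable_swap
      have e1 : Measurable fun p : Ω × ℝ => b * p.2 + σ * W' p.2 p.1 :=
        (measurable_snd.const_mul b).add (hm.const_mul σ)
      have hin : Measurable fun p : Ω × ℝ => x * Real.exp (b * p.2 + σ * W' p.2 p.1) :=
        (Real.measurable_exp.comp e1).const_mul x
      exact (((Real.measurable_exp.comp (measurable_snd.const_mul (-ρ))).mul hin).mul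
        (hh'_cont.measurable.comp hin)).ennreal_ofReal
    have hfq : (Function.uncurry fun ω t =>
          ENNReal.ofReal (Real.exp (-ρ*t) * X t ω * h' (X t ω)))
        =ᵐ[μ.prod (volume.restrict (Set.Ico 0 T))] Function.uncurry q := by
      have hsub : {p : Ω × ℝ | ¬ (Function.uncurry fun ω t =>
            ENNReal.ofReal (Real.exp (-ρ*t) * X t ω * h' (X t ω))) p = Function.uncurry q p}
          ⊆ N ×ˢ (Set.univ : Set ℝ) := by
        rintro ⟨ω, t⟩ hp
        simp only [Set.mem_setOf_eq] at hp
        by_contra hω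
        apply hp
        have hωN : ω ∉ N := by
          simp only [Set.mem_prod, Set.mem_univ, and_true] at hω
          exact hω
        simp only [Function.uncurry, hq, hW', if_neg hωN, hX]
      have hnull : (μ.prod (volume.restrict (Set.Ico 0 T)))
          (N ×ˢ (Set.univ : Set ℝ)) = 0 := by
        rw [Measure.prod_prod, hN0, zero_mul]
      exact ae_iff.mpr (measure_mono_null hsub hnull)
    have hAmeas : AEMeasurable (fun ω => ∫⁻ t in Set.Ico 0 T,
        ENNReal.ofReal (Real.exp (-ρ*t) * X t ω * h' (X t ω)) ∂volume) μ := by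
      refine ⟨fun ω => ∫⁻ t in Set.Ico 0 T, q ω t ∂volume,
        hq_meas.lintegral_prod_right, ?_⟩
      have hNae : ∀ᵐ ω ∂μ, ω ∉ N := by
        rw [ae_iff]
        simpa using hN0
      filter_upwards [hNae] with ω hω
      refine lintegral_congr fun t => ?_
      simp only [hq, hW', if_neg hω, hX]
    have hswap : (∫⁻ ω, (∫⁻ t in Set.Ico 0 T,
          ENNReal.ofReal (Real.exp (-ρ*t) * X t ω * h' (X t ω)) ∂volume) ∂μ)
        = ∫⁻ t in Set.Ico 0 T, (∫⁻ ω,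
            ENNReal.ofReal (Real.exp (-ρ*t) * X t ω * h' (X t ω)) ∂μ) ∂volume :=
      lintegral_lintegral_swap ⟨Function.uncurry q, hq_meas, hfq⟩
    -- decompose the cost
    have hcost : stopCost μ ρ h' X (fun _ => ENNReal.ofReal T)
        = (∫⁻ ω, (∫⁻ t in Set.Ico 0 T,
            ENNReal.ofReal (Real.exp (-ρ*t) * X t ω * h' (X t ω)) ∂volume) ∂μ)
          + ∫⁻ ω, ENNReal.ofReal (Real.exp (-ρ*T) * X T ω) ∂μ := by
      rw [stopCost]
      have hptwise : ∀ ω : Ω,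
          ((∫⁻ t in {t : ℝ | 0 ≤ t ∧ ENNReal.ofReal t < ENNReal.ofReal T},
            ENNReal.ofReal (Real.exp (-ρ * t) * X t ω * h' (X t ω)))
          + (if (ENNReal.ofReal T) < ⊤ then
              ENNReal.ofReal (Real.exp (-ρ * (ENNReal.ofReal T).toReal)
                * X (ENNReal.ofReal T).toReal ω) else 0))
          = (∫⁻ t in Set.Ico 0 T,
              ENNReal.ofReal (Real.exp (-ρ*t) * X t ω * h' (X t ω)) ∂volume)
            + ENNReal.ofReal (Real.exp (-ρ*T) * X T ω) := by
        intro ω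
        rw [hS, if_pos ENNReal.ofReal_lt_top, ENNReal.toReal_ofReal hT0.le]
      calc (∫⁻ ω, (∫⁻ t in {t : ℝ | 0 ≤ t ∧ ENNReal.ofReal t
              < (fun _ : Ω => ENNReal.ofReal T) ω},
            ENNReal.ofReal (Real.exp (-ρ * t) * X t ω * h' (X t ω)))
          + (if (fun _ : Ω => ENNReal.ofReal T) ω < ⊤ then
              ENNReal.ofReal (Real.exp (-ρ * ((fun _ : Ω => ENNReal.ofReal T) ω).toReal)
                * X ((fun _ : Ω => ENNReal.ofReal T) ω).toReal ω) else 0) ∂μ)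
          = ∫⁻ ω, (∫⁻ t in Set.Ico 0 T,
              ENNReal.ofReal (Real.exp (-ρ*t) * X t ω * h' (X t ω)) ∂volume)
            + ENNReal.ofReal (Real.exp (-ρ*T) * X T ω) ∂μ :=
            lintegral_congr hptwise
        _ = _ := lintegral_add_left' hAmeas _
    -- running cost bound
    have hrun : (∫⁻ ω, (∫⁻ t in Set.Ico 0 T,
          ENNReal.ofReal (Real.exp (-ρ*t) * X t ω * h' (X t ω)) ∂volume) ∂μ)
        ≤ ENNReal.ofReal (c₀ * T) := by
      rw [hswap]
      calc (∫⁻ t in Set.Ico 0 T, (∫⁻ ω,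
            ENNReal.ofReal (Real.exp (-ρ*t) * X t ω * h' (X t ω)) ∂μ) ∂volume)
          ≤ ∫⁻ _ in Set.Ico 0 T, ENNReal.ofReal c₀ ∂volume :=
            setLIntegral_mono measurable_const fun t htt => hH t htt.1 htt.2
        _ = ENNReal.ofReal c₀ * volume (Set.Ico 0 T) := setLIntegral_const _ _
        _ = ENNReal.ofReal c₀ * ENNReal.ofReal T := by rw [Real.volume_Ico, sub_zero]
        _ = ENNReal.ofReal (c₀ * T) := (ENNReal.ofReal_mul hc₀0.le).symm
    -- conclude
    refine lt_of_le_of_lt hvle ?_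
    rw [hcost]
    calc (∫⁻ ω, (∫⁻ t in Set.Ico 0 T,
            ENNReal.ofReal (Real.exp (-ρ*t) * X t ω * h' (X t ω)) ∂volume) ∂μ)
          + (∫⁻ ω, ENNReal.ofReal (Real.exp (-ρ*T) * X T ω) ∂μ)
        ≤ ENNReal.ofReal (c₀ * T) + ENNReal.ofReal (x * Real.exp (-(a * T))) :=
          add_le_add hrun (le_of_eq hterm)
      _ = ENNReal.ofReal (c₀ * T + x * Real.exp (-(a * T))) :=
          (ENNReal.ofReal_add (by positivity) (by positivity)).symm
      _ < ENNReal.ofReal x := by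
          rw [ENNReal.ofReal_lt_ofReal_iff hx]
          have hE1 : Real.exp (-(a*T)) * (1 + a*T) ≤ 1 := by
            have h2 : 1 + a*T ≤ Real.exp (a*T) := by
              have := Real.add_one_le_exp (a*T); linarith
            have h3 : Real.exp (-(a*T)) * Real.exp (a*T) = 1 := by
              rw [← Real.exp_add]; simp
            calc Real.exp (-(a*T)) * (1+a*T) ≤ Real.exp (-(a*T)) * Real.exp (a*T) :=
                  mul_le_mul_of_nonneg_left h2 (Real.exp_pos _).le
              _ = 1 := h3
          have hE2 : 1 - a*T ≤ Real.exp (-(a*T)) := by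
            have := Real.add_one_le_exp (-(a*T)); linarith
          have hE0 : (0:ℝ) < Real.exp (-(a*T)) := Real.exp_pos _
          rw [hc₀, hxd]
          clear_value a δ T
          have k1 : x * Real.exp (-(a*T)) + x * Real.exp (-(a*T)) * a * T ≤ x := by
            nlinarith [mul_le_mul_of_nonneg_left hE1 hx.le]
          have k2 : a - δ < a * Real.exp (-(a*T)) := by
            nlinarith [mul_le_mul_of_nonneg_left hE2 ha0.le]
          have k3 : x * (a-δ) * T < x * T * (a * Real.exp (-(a*T))) := by
            have hk := mul_lt_mul_of_pos_left k2 (mul_pos hx hT0)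
            nlinarith [hk]
          nlinarith [k1, k3]
  refine ⟨key, fun x hx hle => ?_⟩
  by_contra hlt
  push_neg at hlt
  exact absurd hle (not_le.mpr (key x hx hlt))
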